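/- Let Y be a Banach space containing a complemented subspace X, and suppose L(X) has at least κ distinct closed ideals for some cardinal κ. Then L(Y) has at least κ distinct closed ideals. Moreover, if L(X) contains an antichain of closed ideals of cardinality κ, so does L(Y). -/

import Mathlib

/-- A factorization `T = A ∘ B` of an operator through a (real) Hilbert space `H`. -/
structure HilbertFactorization {X Y : Type} [NormedAddCommGroup X] [NormedSpace ℝ X]
    [NormedAddCommGroup Y] [NormedSpace ℝ Y] (T : X →L[ℝ] Y) where
  H : Type
  [grp : NormedAddCommGroup H]
  [ip : InnerProductSpace ℝ H]
  B : X →L[ℝ] H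
  A : H →L[ℝ] Y
  eq : A.comp B = T

/-- The quantity `‖A‖ * ‖B‖` of a Hilbert space factorization. -/
noncomputable def HilbertFactorization.c {X Y : Type} [NormedAddCommGroup X]
    [NormedSpace ℝ X] [NormedAddCommGroup Y] [NormedSpace ℝ Y] {T : X →L[ℝ] Y}
    (F : HilbertFactorization T) : ℝ :=
  letI := F.grp
  letI := F.ip
  ‖F.A‖ * ‖F.B‖

/-- The factorization constant `γ₂(T)` of an operator through Hilbert space. -/
noncomputable def gamma2 {X Y : Type} [NormedAddCommGroup X] [NormedSpace ℝ X]
    [NormedAddCommGroup Y] [NormedSpace ℝ Y] (T : X →L[ℝ] Y) : ℝ :=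
  sInf (Set.range fun F : HilbertFactorization T => F.c)

/-- The Banach–Mazur distance of a normed space `E` from the Euclidean space of its
(finite) dimension: the infimum of `‖u‖ * ‖u⁻¹‖` over isomorphisms. -/
noncomputable def euclDist (E : Type) [NormedAddCommGroup E] [NormedSpace ℝ E] : ℝ :=
  sInf {c : ℝ | ∃ u : E ≃L[ℝ] EuclideanSpace ℝ (Fin (Module.finrank ℝ E)),
    c = ‖(u : E →L[ℝ] EuclideanSpace ℝ (Fin (Module.finrank ℝ E)))‖ *
        ‖(u.symm : EuclideanSpace ℝ (Fin (Module.finrank ℝ E)) →L[ℝ] E)‖}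

/-- A (two-sided, not necessarily closed) ideal in the algebra `L(X)`. -/
def IsOpIdeal {X : Type} [NormedAddCommGroup X] [NormedSpace ℝ X]
    (I : Set (X →L[ℝ] X)) : Prop :=
  (0 : X →L[ℝ] X) ∈ I ∧ (∀ S ∈ I, ∀ T ∈ I, S + T ∈ I) ∧
    (∀ c : ℝ, ∀ S ∈ I, c • S ∈ I) ∧
    ∀ A : X →L[ℝ] X, ∀ S ∈ I, A.comp S ∈ I ∧ S.comp A ∈ I

/-- A closed two-sided ideal in the Banach algebra `L(X)`. -/
def IsClosedOpIdeal {X : Type} [NormedAddCommGroup X] [NormedSpace ℝ X]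
    (I : Set (X →L[ℝ] X)) : Prop :=
  IsClosed I ∧ IsOpIdeal I

section Aux

variable {Y : Type} [NormedAddCommGroup Y] [NormedSpace ℝ Y]

noncomputable def Pres (X : Submodule ℝ Y) (Pr : Y →L[ℝ] Y)
    (hrange : LinearMap.range (Pr : Y →ₗ[ℝ] Y) = X) : Y →L[ℝ] X :=
  Pr.codRestrict X (fun y => hrange ▸ LinearMap.mem_range_self (Pr : Y →ₗ[ℝ] Y) y)

lemma Pres_comp_subtypeL (X : Submodule ℝ Y) (Pr : Y →L[ℝ] Y)
    (hidem : Pr.comp Pr = Pr) (hrange : LinearMap.range (Pr : Y →ₗ[ℝ] Y) = X) :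
    (Pres X Pr hrange).comp X.subtypeL = ContinuousLinearMap.id ℝ X := by
  ext x
  obtain ⟨z, hz⟩ : (x : Y) ∈ LinearMap.range (Pr : Y →ₗ[ℝ] Y) := hrange.symm ▸ x.2
  have h : Pr (x : Y) = (x : Y) := by
    rw [← hz]
    have := congrArg (fun T : Y →L[ℝ] Y => T z) hidem
    simpa using this
  simp only [ContinuousLinearMap.comp_apply, ContinuousLinearMap.id_apply]
  rw [Submodule.subtypeL_apply, Pres, ContinuousLinearMap.coe_codRestrict_apply]
  exact h

def Phi (X : Submodule ℝ Y) (P' : Y →L[ℝ] X) (I : Set (X →L[ℝ] X)) :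
    Set (Y →L[ℝ] Y) :=
  ⋂₀ {K | IsClosedOpIdeal K ∧ ∀ S ∈ I, X.subtypeL.comp (S.comp P') ∈ K}

lemma Phi_closedIdeal (X : Submodule ℝ Y) (P' : Y →L[ℝ] X) (I : Set (X →L[ℝ] X)) :
    IsClosedOpIdeal (Phi X P' I) := by
  refine ⟨isClosed_sInter fun K hK => hK.1.1, ?_, ?_, ?_, ?_⟩
  · exact Set.mem_sInter.2 fun K hK => hK.1.2.1
  · intro S hS T hT
    exact Set.mem_sInter.2 fun K hK =>
      hK.1.2.2.1 S (hS K hK) T (hT K hK)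
  · intro c S hS
    exact Set.mem_sInter.2 fun K hK => hK.1.2.2.2.1 c S (hS K hK)
  · intro A S hS
    exact ⟨Set.mem_sInter.2 fun K hK => (hK.1.2.2.2.2 A S (hS K hK)).1,
      Set.mem_sInter.2 fun K hK => (hK.1.2.2.2.2 A S (hS K hK)).2⟩

lemma mem_Phi_self (X : Submodule ℝ Y) (P' : Y →L[ℝ] X) {I : Set (X →L[ℝ] X)}
    {S : X →L[ℝ] X} (hS : S ∈ I) : X.subtypeL.comp (S.comp P') ∈ Phi X P' I :=
  Set.mem_sInter.2 fun _ hK => hK.2 S hS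

lemma Pres_comp_mem (X : Submodule ℝ Y) (P' : Y →L[ℝ] X) {I : Set (X →L[ℝ] X)}
    (hI : IsClosedOpIdeal I) {T : Y →L[ℝ] Y} (hT : T ∈ Phi X P' I) :
    P'.comp (T.comp X.subtypeL) ∈ I := by
  classical
  set J := X.subtypeL with hJ
  set K : Set (Y →L[ℝ] Y) :=
    ⋂ (A : Y →L[ℝ] Y), ⋂ (B : Y →L[ℝ] Y),
      (fun T : Y →L[ℝ] Y => P'.comp ((A.comp (T.comp B)).comp J)) ⁻¹' I with hKdef
  have memK : ∀ T : Y →L[ℝ] Y, T ∈ K ↔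
      ∀ A B : Y →L[ℝ] Y, P'.comp ((A.comp (T.comp B)).comp J) ∈ I := by
    intro T; simp [hKdef, Set.mem_iInter]
  have hcont : ∀ A B : Y →L[ℝ] Y,
      Continuous fun T : Y →L[ℝ] Y => P'.comp ((A.comp (T.comp B)).comp J) := by
    intro A B
    have h : (fun T : Y →L[ℝ] Y => P'.comp ((A.comp (T.comp B)).comp J)) =
        fun T : Y →L[ℝ] Y =>
          ((ContinuousLinearMap.compL ℝ X Y X (P'.comp A)).comp
            ((ContinuousLinearMap.compL ℝ X Y Y).flip (B.comp J))) T := by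
      funext T; ext x; simp
    rw [h]
    exact ContinuousLinearMap.continuous _
  have hKCI : IsClosedOpIdeal K := by
    constructor
    · exact isClosed_iInter fun A => isClosed_iInter fun B =>
        (hI.1.preimage (hcont A B))
    refine ⟨?_, ?_, ?_, ?_⟩
    · refine (memK 0).2 fun A B => ?_
      have : P'.comp ((A.comp ((0 : Y →L[ℝ] Y).comp B)).comp J) = 0 := by
        ext x; simp
      rw [this]; exact hI.2.1
    · intro S hS T hT
      refine (memK _).2 fun A B => ?_
      have : P'.comp ((A.comp ((S + T).comp B)).comp J) =
          P'.comp ((A.comp (S.comp B)).comp J) + P'.comp ((A.comp (T.comp B)).comp J) := by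
        ext x; simp
      rw [this]
      exact hI.2.2.1 _ ((memK S).1 hS A B) _ ((memK T).1 hT A B)
    · intro c S hS
      refine (memK _).2 fun A B => ?_
      have : P'.comp ((A.comp ((c • S).comp B)).comp J) =
          c • P'.comp ((A.comp (S.comp B)).comp J) := by
        ext x; simp
      rw [this]
      exact hI.2.2.2.1 c _ ((memK S).1 hS A B)
    · intro C S hS
      constructor
      · refine (memK _).2 fun A B => ?_
        have : P'.comp ((A.comp ((C.comp S).comp B)).comp J) =
            P'.comp (((A.comp C).comp (S.comp B)).comp J) := by
          ext x; simp
        rw [this]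
        exact (memK S).1 hS (A.comp C) B
      · refine (memK _).2 fun A B => ?_
        have : P'.comp ((A.comp ((S.comp C).comp B)).comp J) =
            P'.comp ((A.comp (S.comp (C.comp B))).comp J) := by
          ext x; simp
        rw [this]
        exact (memK S).1 hS A (C.comp B)
  have hgen : ∀ S ∈ I, J.comp (S.comp P') ∈ K := by
    intro S hS
    refine (memK _).2 fun A B => ?_
    have heq : P'.comp ((A.comp ((J.comp (S.comp P')).comp B)).comp J) =
        (P'.comp (A.comp J)).comp (S.comp (P'.comp (B.comp J))) := by
      ext x; simp
    rw [heq]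
    have h1 : S.comp (P'.comp (B.comp J)) ∈ I := (hI.2.2.2.2 _ S hS).2
    exact (hI.2.2.2.2 (P'.comp (A.comp J)) _ h1).1
  have hTK : T ∈ K := hT K ⟨hKCI, hgen⟩
  have := (memK T).1 hTK (ContinuousLinearMap.id ℝ Y) (ContinuousLinearMap.id ℝ Y)
  have heq : P'.comp (((ContinuousLinearMap.id ℝ Y).comp
      (T.comp (ContinuousLinearMap.id ℝ Y))).comp J) =
      P'.comp (T.comp J) := by ext x; simp
  rwa [heq] at this

lemma Phi_reflect (X : Submodule ℝ Y) (P' : Y →L[ℝ] X)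
    (hPJ : P'.comp X.subtypeL = ContinuousLinearMap.id ℝ X)
    {I I' : Set (X →L[ℝ] X)} (hI' : IsClosedOpIdeal I')
    (h : Phi X P' I ⊆ Phi X P' I') : I ⊆ I' := by
  intro S hS
  have h1 : X.subtypeL.comp (S.comp P') ∈ Phi X P' I' := h (mem_Phi_self X P' hS)
  have h2 := Pres_comp_mem X P' hI' h1
  have hPJ' : ∀ z : X, P' (z : Y) = z := fun z => by
    have := ContinuousLinearMap.ext_iff.1 hPJ z
    simpa using this
  have heq : P'.comp ((X.subtypeL.comp (S.comp P')).comp X.subtypeL) = S := by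
    ext x
    simp only [ContinuousLinearMap.comp_apply, Submodule.subtypeL_apply, hPJ']
  rwa [heq] at h2

end Aux

/-- If `Y` is a Banach space containing a complemented (closed) subspace `X` and
`L(X)` has at least `κ` distinct closed ideals, then so does `L(Y)`; moreover an
antichain of closed ideals of `L(X)` of cardinality `κ` yields one in `L(Y)`. -/
theorem stmt_15 (Y : Type) [NormedAddCommGroup Y] [NormedSpace ℝ Y] [CompleteSpace Y]
    (X : Submodule ℝ Y) (hXc : IsClosed (X : Set Y))
    (Pr : Y →L[ℝ] Y) (hidem : Pr.comp Pr = Pr) (hrange : LinearMap.range (Pr : Y →ₗ[ℝ] Y) = X)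
    (κ : Cardinal) :
    (κ ≤ Cardinal.mk {I : Set (X →L[ℝ] X) // IsClosedOpIdeal I} →
      κ ≤ Cardinal.mk {I : Set (Y →L[ℝ] Y) // IsClosedOpIdeal I}) ∧
    ((∃ F : Set (Set (X →L[ℝ] X)), (∀ I ∈ F, IsClosedOpIdeal I) ∧
        (∀ I ∈ F, ∀ J ∈ F, I ≠ J → ¬ I ⊆ J) ∧ Cardinal.mk F = κ) →
      ∃ F : Set (Set (Y →L[ℝ] Y)), (∀ I ∈ F, IsClosedOpIdeal I) ∧
        (∀ I ∈ F, ∀ J ∈ F, I ≠ J → ¬ I ⊆ J) ∧ Cardinal.mk F = κ) := by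
  have hPJ := Pres_comp_subtypeL X Pr hidem hrange
  set P' := Pres X Pr hrange with hP'
  have hinj : ∀ {I I' : Set (X →L[ℝ] X)}, IsClosedOpIdeal I → IsClosedOpIdeal I' →
      Phi X P' I = Phi X P' I' → I = I' := fun hI hI' h =>
    Set.Subset.antisymm (Phi_reflect X P' hPJ hI' h.subset)
      (Phi_reflect X P' hPJ hI h.superset)
  constructor
  · intro hκ
    refine hκ.trans (Cardinal.mk_le_of_injective
      (f := fun I : {I : Set (X →L[ℝ] X) // IsClosedOpIdeal I} =>
        (⟨Phi X P' I.1, Phi_closedIdeal X P' I.1⟩ :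
          {I : Set (Y →L[ℝ] Y) // IsClosedOpIdeal I})) ?_)
    rintro ⟨I, hI⟩ ⟨I', hI'⟩ h
    exact Subtype.ext (hinj hI hI' (Subtype.ext_iff.1 h))
  · rintro ⟨F, hF1, hF2, hF3⟩
    refine ⟨Phi X P' '' F, ?_, ?_, ?_⟩
    · rintro _ ⟨I, hIF, rfl⟩; exact Phi_closedIdeal X P' I
    · rintro _ ⟨I, hIF, rfl⟩ _ ⟨I', hI'F, rfl⟩ hne hsub
      have hne' : I ≠ I' := fun h => hne (h ▸ rfl)
      exact hF2 I hIF I' hI'F hne' (Phi_reflect X P' hPJ (hF1 I' hI'F) hsub)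
    · rw [Cardinal.mk_image_eq_of_injOn]
      · exact hF3
      · intro I hIF I' hI'F h
        exact hinj (hF1 I hIF) (hF1 I' hI'F) h
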